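/- If a binary word f starts with 110 and ends with 100 (and thus has a 2-tilde-error overlap of type RR of shift |f|−3), then f is tilde-non-isometric; in particular, writing f = 110·w1 = w2·100, the words α̃ = w2·1010·w1 and δ̃ = w2·0101·w1 form a pair of tilde-witnesses for f. -/

import Mathlib

/-- Edit operations on binary words: `R i` flips the bit at position `i`,
`S i` swaps the (distinct) bits at positions `i` and `i+1`. Positions are 0-based. -/
inductive TOp where
  | R (i : ℕ)
  | S (i : ℕ)
deriving DecidableEq

namespace TOp

def apply : TOp → List Bool → List Bool
  | R i, w => w.set i (!(w.getD i false))
  | S i, w => (w.set i (w.getD (i+1) false)).set (i+1) (w.getD i false)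

def valid : TOp → List Bool → Prop
  | R i, w => i < w.length
  | S i, w => i + 1 < w.length ∧ w.getD i false ≠ w.getD (i+1) false

/-- The set of positions modified by an operation. -/
def positions : TOp → Finset ℕ
  | R i => {i}
  | S i => {i, i+1}

/-- The (leftmost) position of an operation. -/
def pos : TOp → ℕ
  | R i => i
  | S i => i

def isR : TOp → Prop
  | R _ => True
  | S _ => False

def isS : TOp → Prop
  | R _ => False
  | S _ => True

end TOp

/-- All operations of a sequence are valid when applied successively starting from `w`. -/
def validSeq : List TOp → List Bool → Prop
  | [], _ => True
  | o :: os, w => o.valid w ∧ validSeq os (o.apply w)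

def applySeq : List TOp → List Bool → List Bool
  | [], w => w
  | o :: os, w => applySeq os (o.apply w)

/-- `ops` is a tilde-transformation from `u` to `v`. -/
def Transforms (ops : List TOp) (u v : List Bool) : Prop :=
  validSeq ops u ∧ applySeq ops u = v

/-- The swap-mismatch (tilde) distance between two words. -/
noncomputable def tdist (u v : List Bool) : ℕ :=
  sInf { n | ∃ ops : List TOp, ops.length = n ∧ Transforms ops u v }

/-- Each position of the word is modified at most once along the sequence. -/
def eachPosOnce (ops : List TOp) : Prop :=
  ops.Pairwise fun o o' => Disjoint o.positions o'.positions

/-- A minimal tilde-transformation: length `tdist u v`, each position changed at most once. -/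
def MinimalTransf (ops : List TOp) (u v : List Bool) : Prop :=
  Transforms ops u v ∧ ops.length = tdist u v ∧ eachPosOnce ops

/-- The list of all words `w_0 = u, w_1, …, w_h` visited by the transformation. -/
def trajectory (ops : List TOp) (u : List Bool) : List (List Bool) :=
  List.scanl (fun w o => o.apply w) u ops

/-- `w` avoids `f` as a factor. -/
def FFree (f w : List Bool) : Prop := ¬ f <:+: w

/-- All words along the transformation are `f`-free. -/
def FreeTransf (f : List Bool) (ops : List TOp) (u : List Bool) : Prop :=
  ∀ w ∈ trajectory ops u, FFree f w

/-- `f` is tilde-isometric. -/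
def TildeIsometric (f : List Bool) : Prop :=
  ∀ u v : List Bool, u.length = v.length → f.length < u.length →
    FFree f u → FFree f v →
      ∃ ops : List TOp, MinimalTransf ops u v ∧ FreeTransf f ops u

/-- `(u,v)` is a pair of tilde-witnesses for `f`. -/
def Witnesses (f u v : List Bool) : Prop :=
  u.length = v.length ∧ FFree f u ∧ FFree f v ∧ 2 ≤ tdist u v ∧
    ∀ ops : List TOp, MinimalTransf ops u v → ¬ FreeTransf f ops u

/-- Hamming distance between equal-length words (number of mismatch positions). -/
def hdist (u v : List Bool) : ℕ := ((u.zip v).filter fun p => p.1 != p.2).length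

namespace Stmt18

lemma getD_set_ne (w : List Bool) {i j : ℕ} (a : Bool) (h : i ≠ j) :
    (w.set i a).getD j false = w.getD j false := by
  rw [List.getD_eq_getElem?_getD, List.getD_eq_getElem?_getD, List.getElem?_set_ne h]

lemma apply_getD_not_mem (o : TOp) (w : List Bool) {j : ℕ} (hj : j ∉ o.positions) :
    (o.apply w).getD j false = w.getD j false := by
  cases o with
  | R i =>
    simp only [TOp.positions, Finset.mem_singleton] at hj
    exact getD_set_ne w _ (Ne.symm hj)
  | S i =>
    simp only [TOp.positions, Finset.mem_insert, Finset.mem_singleton, not_or] at hj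
    rw [TOp.apply, getD_set_ne _ _ (fun h => hj.2 h.symm), getD_set_ne _ _ (fun h => hj.1 h.symm)]

lemma getD_concat_left (w2 X w1 : List Bool) {j : ℕ} (hj : j < w2.length) :
    (w2 ++ X ++ w1).getD j false = w2.getD j false := by
  rw [List.getD_append _ _ _ _ (by rw [List.length_append]; omega), List.getD_append _ _ _ _ hj]

lemma getD_concat_mid (w2 X w1 : List Bool) (i : ℕ) {j : ℕ} (hj : j = w2.length + i)
    (hi : i < X.length) :
    (w2 ++ X ++ w1).getD j false = X.getD i false := by
  subst hj
  rw [List.getD_append _ _ _ _ (by rw [List.length_append]; omega),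
    List.getD_append_right _ _ _ _ (Nat.le_add_right _ _), Nat.add_sub_cancel_left]

lemma getD_concat_right (w2 X w1 : List Bool) (i : ℕ) {j : ℕ}
    (hj : j = w2.length + X.length + i) :
    (w2 ++ X ++ w1).getD j false = w1.getD i false := by
  subst hj
  rw [List.getD_append_right _ _ _ _ (by rw [List.length_append]; omega)]
  congr 1
  rw [List.length_append]; omega

lemma set_concat (w2 X w1 : List Bool) (i : ℕ) {j : ℕ} (hj : j = w2.length + i)
    (hi : i < X.length) (a : Bool) :
    (w2 ++ X ++ w1).set j a = w2 ++ X.set i a ++ w1 := by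
  subst hj
  rw [List.set_append, if_pos (by rw [List.length_append]; omega),
      List.set_append, if_neg (by omega), Nat.add_sub_cancel_left]

lemma apply_S_concat (w2 X w1 : List Bool) (i : ℕ) {j : ℕ} (hj : j = w2.length + i)
    (hi : i + 1 < X.length) :
    (TOp.S j).apply (w2 ++ X ++ w1) =
      w2 ++ ((X.set i (X.getD (i+1) false)).set (i+1) (X.getD i false)) ++ w1 := by
  subst hj
  rw [TOp.apply,
      getD_concat_mid w2 X w1 i rfl (by omega),
      getD_concat_mid w2 X w1 (i+1) (by omega) hi,
      set_concat w2 X w1 i rfl (by omega),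
      set_concat w2 _ w1 (i+1) (by omega) (by rw [List.length_set]; omega)]

lemma occ_getD {s t u fw : List Bool} (h : s ++ (fw ++ t) = u) {i : ℕ} (hi : i < fw.length) :
    u.getD (s.length + i) false = fw.getD i false := by
  subst h
  rw [List.getD_append_right _ _ _ _ (Nat.le_add_right _ _), Nat.add_sub_cancel_left,
      List.getD_append _ _ _ _ hi]



lemma ffreeU (f w1 w2 : List Bool) (h1 : f = [true, true, false] ++ w1)
    (h2 : f = w2 ++ [true, false, false]) :
    FFree f (w2 ++ [true, false, true, false] ++ w1) := by
  have hw1 : w1.length = w2.length := by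
    have := congrArg List.length (h1.symm.trans h2)
    simp at this; omega
  have hfl : f.length = w2.length + 3 := by rw [h2]; simp
  have hFhead : ∀ i, i < 3 → f.getD i false = [true, true, false].getD i false := by
    intro i hi
    rw [h1, List.getD_append _ _ _ _ (by simpa using hi)]
  have hFtail : ∀ j i, j = w2.length + i → f.getD j false = [true, false, false].getD i false := by
    intro j i hj; subst hj
    rw [h2, List.getD_append_right _ _ _ _ (Nat.le_add_right _ _), Nat.add_sub_cancel_left]
  have hFw1 : ∀ j i, j = 3 + i → f.getD j false = w1.getD i false := by
    intro j i hj; subst hj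
    rw [h1, List.getD_append_right _ _ _ _ (by simp)]
    congr 1
    simp
  have hFw2 : ∀ j, j < w2.length → f.getD j false = w2.getD j false := by
    intro j hj; rw [h2, List.getD_append _ _ _ _ hj]
  rintro ⟨s, t, hst⟩
  rw [List.append_assoc] at hst
  have hlen := congrArg List.length hst
  simp only [List.length_append, List.length_cons, List.length_nil] at hlen
  have hocc : ∀ i, i < w2.length + 3 →
      (w2 ++ [true, false, true, false] ++ w1).getD (s.length + i) false = f.getD i false := by
    intro i hi; exact occ_getD hst (by omega)
  set k := s.length with hk
  have hcase : k = 0 ∨ k = 1 ∨ k = w2.length ∨ k = w2.length + 1 ∨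
      (2 ≤ k ∧ k + 1 < w2.length) ∨ (2 ≤ k ∧ k + 1 = w2.length) := by omega
  rcases hcase with h | h | h | h | ⟨h, h'⟩ | ⟨h, h'⟩
  · have e := hocc (w2.length + 2) (by omega)
    rw [getD_concat_mid w2 _ w1 2 (by omega) (by simp), hFtail _ 2 (by omega)] at e
    simp at e
  · have e := hocc w2.length (by omega)
    rw [getD_concat_mid w2 _ w1 1 (by omega) (by simp), hFtail _ 0 (by omega)] at e
    simp at e
  · have e := hocc 1 (by omega)
    rw [getD_concat_mid w2 _ w1 1 (by omega) (by simp), hFhead 1 (by omega)] at e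
    simp at e
  · have e := hocc 0 (by omega)
    rw [getD_concat_mid w2 _ w1 1 (by omega) (by simp), hFhead 0 (by omega)] at e
    simp at e
  · have e1 := hocc 1 (by omega)
    rw [getD_concat_left w2 _ w1 (by omega), hFhead 1 (by omega)] at e1
    simp only [List.getD] at e1
    have e2 := hocc (w2.length + 2) (by omega)
    rw [getD_concat_right w2 _ w1 (k - 2) (by simp; omega), hFtail _ 2 (by omega)] at e2
    have e3 := hFw1 (k + 1) (k - 2) (by omega)
    have e4 := hFw2 (k + 1) (by omega)
    have e1' : w2.getD (k+1) false = true := e1.trans (by decide)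
    have e2' : w1.getD (k-2) false = false := e2.trans (by decide)
    exact Bool.noConfusion (e1'.symm.trans ((e4.symm.trans e3).trans e2'))
  · have e2 := hocc (w2.length + 2) (by omega)
    rw [getD_concat_right w2 _ w1 (k - 2) (by simp; omega), hFtail _ 2 (by omega)] at e2
    have e3 := hFw1 (k + 1) (k - 2) (by omega)
    have e5 : f.getD (k+1) false = true := (hFtail (k + 1) 0 (by omega)).trans (by decide)
    have e2' : w1.getD (k-2) false = false := e2.trans (by decide)
    exact Bool.noConfusion (e5.symm.trans (e3.trans e2'))

lemma ffreeV (f w1 w2 : List Bool) (h1 : f = [true, true, false] ++ w1)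
    (h2 : f = w2 ++ [true, false, false]) :
    FFree f (w2 ++ [false, true, false, true] ++ w1) := by
  have hw1 : w1.length = w2.length := by
    have := congrArg List.length (h1.symm.trans h2)
    simp at this; omega
  have hfl : f.length = w2.length + 3 := by rw [h2]; simp
  have hFhead : ∀ i, i < 3 → f.getD i false = [true, true, false].getD i false := by
    intro i hi
    rw [h1, List.getD_append _ _ _ _ (by simpa using hi)]
  have hFtail : ∀ j i, j = w2.length + i → f.getD j false = [true, false, false].getD i false := by
    intro j i hj; subst hj
    rw [h2, List.getD_append_right _ _ _ _ (Nat.le_add_right _ _), Nat.add_sub_cancel_left]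
  have hFw1 : ∀ j i, j = 3 + i → f.getD j false = w1.getD i false := by
    intro j i hj; subst hj
    rw [h1, List.getD_append_right _ _ _ _ (by simp)]
    congr 1
    simp
  have hFw2 : ∀ j, j < w2.length → f.getD j false = w2.getD j false := by
    intro j hj; rw [h2, List.getD_append _ _ _ _ hj]
  rintro ⟨s, t, hst⟩
  rw [List.append_assoc] at hst
  have hlen := congrArg List.length hst
  simp only [List.length_append, List.length_cons, List.length_nil] at hlen
  have hocc : ∀ i, i < w2.length + 3 →
      (w2 ++ [false, true, false, true] ++ w1).getD (s.length + i) false = f.getD i false := by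
    intro i hi; exact occ_getD hst (by omega)
  set k := s.length with hk
  have hcase : k = 0 ∨ k = 1 ∨ k = w2.length ∨ k = w2.length + 1 ∨
      (2 ≤ k ∧ k + 1 < w2.length) ∨ (2 ≤ k ∧ k + 1 = w2.length) := by omega
  rcases hcase with h | h | h | h | ⟨h, h'⟩ | ⟨h, h'⟩
  · have e := hocc w2.length (by omega)
    rw [getD_concat_mid w2 _ w1 0 (by omega) (by simp), hFtail _ 0 (by omega)] at e
    simp at e
  · have e := hocc (w2.length + 2) (by omega)
    rw [getD_concat_mid w2 _ w1 3 (by omega) (by simp), hFtail _ 2 (by omega)] at e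
    simp at e
  · have e := hocc 0 (by omega)
    rw [getD_concat_mid w2 _ w1 0 (by omega) (by simp), hFhead 0 (by omega)] at e
    simp at e
  · have e := hocc 1 (by omega)
    rw [getD_concat_mid w2 _ w1 2 (by omega) (by simp), hFhead 1 (by omega)] at e
    simp at e
  · have e1 := hocc 1 (by omega)
    rw [getD_concat_left w2 _ w1 (by omega), hFhead 1 (by omega)] at e1
    have e2 := hocc (w2.length + 2) (by omega)
    rw [getD_concat_right w2 _ w1 (k - 2) (by simp; omega), hFtail _ 2 (by omega)] at e2
    have e3 := hFw1 (k + 1) (k - 2) (by omega)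
    have e4 := hFw2 (k + 1) (by omega)
    have e1' : w2.getD (k+1) false = true := e1.trans (by decide)
    have e2' : w1.getD (k-2) false = false := e2.trans (by decide)
    exact Bool.noConfusion (e1'.symm.trans ((e4.symm.trans e3).trans e2'))
  · have e2 := hocc (w2.length + 2) (by omega)
    rw [getD_concat_right w2 _ w1 (k - 2) (by simp; omega), hFtail _ 2 (by omega)] at e2
    have e3 := hFw1 (k + 1) (k - 2) (by omega)
    have e5 : f.getD (k+1) false = true := (hFtail (k + 1) 0 (by omega)).trans (by decide)
    have e2' : w1.getD (k-2) false = false := e2.trans (by decide)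
    exact Bool.noConfusion (e5.symm.trans (e3.trans e2'))


end Stmt18

theorem stmt18 (f w1 w2 : List Bool)
    (h1 : f = [true, true, false] ++ w1)
    (h2 : f = w2 ++ [true, false, false]) :
    ¬ TildeIsometric f ∧
    Witnesses f (w2 ++ [true, false, true, false] ++ w1)
                (w2 ++ [false, true, false, true] ++ w1) := by
  have hw1 : w1.length = w2.length := by
    have := congrArg List.length (h1.symm.trans h2)
    simp at this; omega
  have hfl : f.length = w2.length + 3 := by rw [h2]; simp
  set u := w2 ++ [true, false, true, false] ++ w1 with hu
  set v := w2 ++ [false, true, false, true] ++ w1 with hv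
  have hul : u.length = w2.length + 4 + w1.length := by
    rw [hu]; simp only [List.length_append, List.length_cons, List.length_nil]
  have hvl : v.length = w2.length + 4 + w1.length := by
    rw [hv]; simp only [List.length_append, List.length_cons, List.length_nil]
  have hum : u.getD w2.length false = true := by
    rw [hu, Stmt18.getD_concat_mid w2 _ w1 0 (by omega) (by simp)]
    decide
  have hum1 : u.getD (w2.length + 1) false = false := by
    rw [hu, Stmt18.getD_concat_mid w2 _ w1 1 (by omega) (by simp)]
    decide
  have hum3 : u.getD (w2.length + 3) false = false := by
    rw [hu, Stmt18.getD_concat_mid w2 _ w1 3 (by omega) (by simp)]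
    decide
  have hvm : v.getD w2.length false = false := by
    rw [hv, Stmt18.getD_concat_mid w2 _ w1 0 (by omega) (by simp)]
    decide
  have hvm1 : v.getD (w2.length + 1) false = true := by
    rw [hv, Stmt18.getD_concat_mid w2 _ w1 1 (by omega) (by simp)]
    decide
  have hvm2 : v.getD (w2.length + 2) false = false := by
    rw [hv, Stmt18.getD_concat_mid w2 _ w1 2 (by omega) (by simp)]
    decide
  have hvm3 : v.getD (w2.length + 3) false = true := by
    rw [hv, Stmt18.getD_concat_mid w2 _ w1 3 (by omega) (by simp)]
    decide
  -- the two swap applications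
  have happ1 : (TOp.S w2.length).apply u = w2 ++ [false, true, true, false] ++ w1 := by
    rw [hu, Stmt18.apply_S_concat w2 _ w1 0 (by omega) (by simp)]
    rfl
  have happ2 : (TOp.S (w2.length + 2)).apply (w2 ++ [false, true, true, false] ++ w1) = v := by
    rw [hv, Stmt18.apply_S_concat w2 _ w1 2 (by omega) (by simp)]
    rfl
  have happ3 : (TOp.S (w2.length + 2)).apply u = w2 ++ [true, false, false, true] ++ w1 := by
    rw [hu, Stmt18.apply_S_concat w2 _ w1 2 (by omega) (by simp)]
    rfl
  have htrans : Transforms [TOp.S w2.length, TOp.S (w2.length + 2)] u v := by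
    constructor
    · refine ⟨⟨?_, ?_⟩, ⟨?_, ?_⟩, trivial⟩
      · omega
      · rw [hum, hum1]; decide
      · rw [happ1]
        simp only [List.length_append, List.length_cons, List.length_nil]; omega
      · rw [happ1,
          Stmt18.getD_concat_mid w2 _ w1 2 (by omega) (by simp),
          Stmt18.getD_concat_mid w2 _ w1 3 (by omega) (by simp)]
        decide
    · show applySeq _ u = v
      simp only [applySeq]
      rw [happ1, happ2]
  have h2S : 2 ∈ {n | ∃ ops : List TOp, ops.length = n ∧ Transforms ops u v} :=
    ⟨[TOp.S w2.length, TOp.S (w2.length + 2)], rfl, htrans⟩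
  have hle : tdist u v ≤ 2 := Nat.sInf_le h2S
  have hmemS := Nat.sInf_mem (⟨2, h2S⟩ :
    Set.Nonempty {n | ∃ ops : List TOp, ops.length = n ∧ Transforms ops u v})
  have hge : 2 ≤ tdist u v := by
    by_contra hlt
    push_neg at hlt
    obtain ⟨ops, hol, hov, hoa⟩ := hmemS
    have : ops.length = 0 ∨ ops.length = 1 := by
      rw [hol]; show tdist u v = 0 ∨ tdist u v = 1; omega
    rcases this with h0 | h01
    · rw [List.length_eq_zero_iff] at h0
      subst h0
      have : u = v := hoa
      rw [this, hvm] at hum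
      exact Bool.noConfusion hum
    · rw [List.length_eq_one_iff] at h01
      obtain ⟨o, rfl⟩ := h01
      have hoa' : o.apply u = v := hoa
      have : (w2.length ∉ o.positions) ∨ (w2.length + 3 ∉ o.positions) := by
        cases o with
        | R i =>
          simp only [TOp.positions, Finset.mem_singleton]
          omega
        | S i =>
          simp only [TOp.positions, Finset.mem_insert, Finset.mem_singleton]
          omega
      rcases this with h | h
      · have := Stmt18.apply_getD_not_mem o u h
        rw [hoa', hum, hvm] at this
        exact Bool.noConfusion this
      · have := Stmt18.apply_getD_not_mem o u h
        rw [hoa', hum3, hvm3] at this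
        exact Bool.noConfusion this
  have htd : tdist u v = 2 := le_antisymm hle hge
  have hfU : FFree f u := Stmt18.ffreeU f w1 w2 h1 h2
  have hfV : FFree f v := Stmt18.ffreeV f w1 w2 h1 h2
  have hwit5 : ∀ ops : List TOp, MinimalTransf ops u v → ¬ FreeTransf f ops u := by
    rintro ops ⟨⟨hval, happ⟩, hlen, honce⟩ hfree
    rw [htd] at hlen
    obtain ⟨o1, o2, rfl⟩ := List.length_eq_two.mp hlen
    have hdisj : Disjoint o1.positions o2.positions := by
      have := List.pairwise_cons.mp honce
      exact this.1 o2 (by simp)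
    have happ' : o2.apply (o1.apply u) = v := happ
    have hcov : ∀ j : ℕ, u.getD j false ≠ v.getD j false →
        j ∈ o1.positions ∨ j ∈ o2.positions := by
      intro j hj
      by_contra hc
      push_neg at hc
      exact hj (by
        rw [← happ', Stmt18.apply_getD_not_mem o2 _ hc.2, Stmt18.apply_getD_not_mem o1 _ hc.1])
    have hmemtraj : o1.apply u ∈ trajectory [o1, o2] u := by
      simp [trajectory, List.scanl]
    have hum2 : u.getD (w2.length + 2) false = true := by
      rw [hu, Stmt18.getD_concat_mid w2 _ w1 2 (by omega) (by simp)]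
      decide
    have c0 := hcov w2.length (by rw [hum, hvm]; decide)
    have c1 := hcov (w2.length + 1) (by rw [hum1, hvm1]; decide)
    have c2 := hcov (w2.length + 2) (by rw [hum2, hvm2]; decide)
    have c3 := hcov (w2.length + 3) (by rw [hum3, hvm3]; decide)
    cases o1 with
    | R i =>
      cases o2 with
      | R j =>
        simp only [TOp.positions, Finset.mem_singleton] at c0 c1 c2 c3
        omega
      | S j =>
        simp only [TOp.positions, Finset.mem_singleton, Finset.mem_insert] at c0 c1 c2 c3
        omega
    | S i =>
      cases o2 with
      | R j =>
        simp only [TOp.positions, Finset.mem_singleton, Finset.mem_insert] at c0 c1 c2 c3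
        omega
      | S j =>
        simp only [TOp.positions, Finset.mem_singleton, Finset.mem_insert] at c0 c1 c2 c3
        have hd1 : ¬(i = j ∨ i = j + 1) := by
          have := Finset.disjoint_left.mp hdisj
            (show i ∈ (TOp.S i).positions by simp [TOp.positions])
          simpa [TOp.positions] using this
        have hd2 : ¬(i + 1 = j ∨ i + 1 = j + 1) := by
          have := Finset.disjoint_left.mp hdisj
            (show i + 1 ∈ (TOp.S i).positions by simp [TOp.positions])
          simpa [TOp.positions] using this
        have hij : i = w2.length ∨ i = w2.length + 2 := by omega
        rcases hij with hij | hij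
        · subst hij
          exact hfree _ hmemtraj ⟨w2 ++ [false], [], by rw [happ1, h1]; simp⟩
        · subst hij
          exact hfree _ hmemtraj ⟨[], true :: w1, by rw [happ3, h2]; simp⟩
  refine ⟨?_, by rw [hul, hvl], hfU, hfV, by rw [htd], hwit5⟩
  intro hiso
  obtain ⟨ops, hmin, hfree⟩ := hiso u v (by rw [hul, hvl]) (by rw [hfl, hul]; omega) hfU hfV
  exact hwit5 ops hmin hfree
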